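/- arXiv:1108.5118 — 5 statements merged into one kernel-verified Lean document; each statement's English description precedes it below -/
import Mathlib

section
/- Let F be a local field (finite extension of ℚ_p, p odd) and E/F a totally ramified, tamely ramified extension of degree n. Then (𝒪_E^×)^n ∩ 𝒪_F^× = (𝒪_F^×)^n, i.e., a unit of F that is an n-th power of a unit of E is already an n-th power of a unit of F. -/
open IsLocalRing Polynomial

section AuxFactor

variable {A B : Type*} [CommRing A] [CommRing B] [IsDomain A] [IsDomain B] [Algebra A B]

/-- If `B` is a local domain, integral over the integrally closed local domain `A` with
injective structure map, then the reduction of the minimal polynomial of `v : B` modulo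
the maximal ideal of `A` has at most one monic irreducible factor. -/
theorem minpoly_red_unique_factor
    [IsIntegrallyClosed A] [IsLocalRing A] [IsLocalRing B] [Algebra.IsIntegral A B]
    (hinj : Function.Injective (algebraMap A B))
    (v : B) (φ₁ φ₂ : (ResidueField A)[X])
    (h1i : Irreducible φ₁) (h2i : Irreducible φ₂)
    (h1m : φ₁.Monic) (h2m : φ₂.Monic)
    (h1d : φ₁ ∣ (minpoly A v).map (residue A))
    (h2d : φ₂ ∣ (minpoly A v).map (residue A)) :
    φ₁ = φ₂ := by
  haveI : Module.IsTorsionFree A B := Module.isTorsionFree_iff_algebraMap_injective.mpr hinj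
  by_contra hne
  set g := minpoly A v with hg
  set I : Ideal A[X] := Ideal.span {g} with hI
  -- the evaluation map `A[X]/(g) → B`
  have hkill : ∀ x ∈ I, (Polynomial.aeval v).toRingHom x = 0 := by
    intro x hx
    obtain ⟨c, rfl⟩ := Ideal.mem_span_singleton.mp hx
    show (Polynomial.aeval v) (g * c) = 0
    rw [map_mul, hg, minpoly.aeval, zero_mul]
  let ev : (A[X] ⧸ I) →+* B := Ideal.Quotient.lift I (Polynomial.aeval v).toRingHom hkill
  have hev_mk : ∀ P : A[X], ev (Ideal.Quotient.mk I P) = Polynomial.aeval v P := fun P =>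
    Ideal.Quotient.lift_mk I _ _
  have hevinj : Function.Injective ev := by
    rw [injective_iff_map_eq_zero]
    intro x hx
    obtain ⟨P, rfl⟩ := Ideal.Quotient.mk_surjective x
    rw [hev_mk] at hx
    have : g ∣ P := minpoly.isIntegrallyClosed_dvd (Algebra.IsIntegral.isIntegral v) hx
    rwa [Ideal.Quotient.eq_zero_iff_mem, Ideal.mem_span_singleton]
  letI : Algebra (A[X] ⧸ I) B := ev.toAlgebra
  haveI : IsScalarTower A (A[X] ⧸ I) B := IsScalarTower.of_algebraMap_eq fun x => by
    show algebraMap A B x = ev (algebraMap A (A[X] ⧸ I) x)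
    rw [show algebraMap A (A[X] ⧸ I) x = Ideal.Quotient.mk I (C x) from rfl, hev_mk, aeval_C]
  haveI : Algebra.IsIntegral (A[X] ⧸ I) B :=
    ⟨fun x => IsIntegral.tower_top (R := A) (Algebra.IsIntegral.isIntegral x)⟩
  -- residue-reduction maps to the two quotient fields
  have mk_kill : ∀ φ : (ResidueField A)[X], φ ∣ g.map (residue A) → ∀ x ∈ I,
      ((Ideal.Quotient.mk (Ideal.span {φ})).comp (mapRingHom (residue A))) x = 0 := by
    intro φ hφ x hx
    obtain ⟨c, rfl⟩ := Ideal.mem_span_singleton.mp hx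
    simp only [RingHom.comp_apply, coe_mapRingHom, Polynomial.map_mul,
      Ideal.Quotient.eq_zero_iff_mem]
    exact Ideal.mul_mem_right _ _ (Ideal.mem_span_singleton.mpr hφ)
  let σ₁ : (A[X] ⧸ I) →+* ((ResidueField A)[X] ⧸ Ideal.span {φ₁}) :=
    Ideal.Quotient.lift I _ (mk_kill φ₁ h1d)
  let σ₂ : (A[X] ⧸ I) →+* ((ResidueField A)[X] ⧸ Ideal.span {φ₂}) :=
    Ideal.Quotient.lift I _ (mk_kill φ₂ h2d)
  have hσ₁_mk : ∀ P : A[X], σ₁ (Ideal.Quotient.mk I P)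
      = Ideal.Quotient.mk (Ideal.span {φ₁}) (P.map (residue A)) := fun P =>
    Ideal.Quotient.lift_mk I _ _
  have hσ₂_mk : ∀ P : A[X], σ₂ (Ideal.Quotient.mk I P)
      = Ideal.Quotient.mk (Ideal.span {φ₂}) (P.map (residue A)) := fun P =>
    Ideal.Quotient.lift_mk I _ _
  have hσ₁_surj : Function.Surjective σ₁ := by
    intro y
    obtain ⟨ψ, rfl⟩ := Ideal.Quotient.mk_surjective y
    obtain ⟨P, rfl⟩ := Polynomial.map_surjective (residue A) residue_surjective ψ
    exact ⟨Ideal.Quotient.mk I P, hσ₁_mk P⟩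
  have hσ₂_surj : Function.Surjective σ₂ := by
    intro y
    obtain ⟨ψ, rfl⟩ := Ideal.Quotient.mk_surjective y
    obtain ⟨P, rfl⟩ := Polynomial.map_surjective (residue A) residue_surjective ψ
    exact ⟨Ideal.Quotient.mk I P, hσ₂_mk P⟩
  haveI hm1 : (Ideal.span {φ₁}).IsMaximal := PrincipalIdealRing.isMaximal_of_irreducible h1i
  haveI hm2 : (Ideal.span {φ₂}).IsMaximal := PrincipalIdealRing.isMaximal_of_irreducible h2i
  letI : Field ((ResidueField A)[X] ⧸ Ideal.span {φ₁}) := Ideal.Quotient.field _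
  letI : Field ((ResidueField A)[X] ⧸ Ideal.span {φ₂}) := Ideal.Quotient.field _
  haveI hk1 : (RingHom.ker σ₁).IsMaximal := RingHom.ker_isMaximal_of_surjective _ hσ₁_surj
  haveI hk2 : (RingHom.ker σ₂).IsMaximal := RingHom.ker_isMaximal_of_surjective _ hσ₂_surj
  -- the two kernels are distinct
  obtain ⟨h₁, hh₁⟩ := Polynomial.map_surjective (residue A) residue_surjective φ₁
  have hx1 : Ideal.Quotient.mk I h₁ ∈ RingHom.ker σ₁ := by
    rw [RingHom.mem_ker, hσ₁_mk, hh₁, Ideal.Quotient.eq_zero_iff_mem]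
    exact Ideal.mem_span_singleton.mpr dvd_rfl
  have hx2 : Ideal.Quotient.mk I h₁ ∉ RingHom.ker σ₂ := by
    rw [RingHom.mem_ker, hσ₂_mk, hh₁, Ideal.Quotient.eq_zero_iff_mem, Ideal.mem_span_singleton]
    intro hdvd
    obtain ⟨c, hc⟩ := hdvd
    rcases h1i.isUnit_or_isUnit hc with h | h
    · exact h2i.not_isUnit h
    · exact hne (eq_of_monic_of_associated h2m h1m
        ⟨h.unit, by rw [IsUnit.unit_spec]; exact hc.symm⟩).symm
  have hkerne : RingHom.ker σ₁ ≠ RingHom.ker σ₂ := fun h => hx2 (h ▸ hx1)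
  -- but both kernels come from the unique maximal ideal of `B`
  have hbot1 : RingHom.ker (algebraMap (A[X] ⧸ I) B) ≤ RingHom.ker σ₁ := by
    rw [(RingHom.injective_iff_ker_eq_bot (algebraMap (A[X] ⧸ I) B)).mp hevinj]; exact bot_le
  have hbot2 : RingHom.ker (algebraMap (A[X] ⧸ I) B) ≤ RingHom.ker σ₂ := by
    rw [(RingHom.injective_iff_ker_eq_bot (algebraMap (A[X] ⧸ I) B)).mp hevinj]; exact bot_le
  obtain ⟨Q₁, hQ₁max, hQ₁⟩ :=
    Ideal.exists_ideal_over_maximal_of_isIntegral (S := B) (RingHom.ker σ₁) hbot1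
  obtain ⟨Q₂, hQ₂max, hQ₂⟩ :=
    Ideal.exists_ideal_over_maximal_of_isIntegral (S := B) (RingHom.ker σ₂) hbot2
  rw [eq_maximalIdeal hQ₁max] at hQ₁
  rw [eq_maximalIdeal hQ₂max] at hQ₂
  exact hkerne (hQ₁.symm.trans hQ₂)

/-- An `n`-th root in `B` of a unit of `A` already lies in `A`, provided the residue map is
"surjective from `A`", `n` is invertible in the residue field, and `B` is a local domain
integral over the integrally closed local domain `A`. -/
theorem exists_pow_eq_of_pow_eq
    [IsIntegrallyClosed A] [IsLocalRing A] [IsLocalRing B] [Algebra.IsIntegral A B]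
    (hinj : Function.Injective (algebraMap A B))
    {n : ℕ} (hn0 : n ≠ 0) (hnk : (n : ResidueField A) ≠ 0)
    (hres : ∀ x : B, ∃ a : A, x - algebraMap A B a ∈ maximalIdeal B)
    (u : A) (hu : IsUnit u) (v : B) (hv : v ^ n = algebraMap A B u) :
    ∃ w : A, w ^ n = u := by
  haveI : Module.IsTorsionFree A B := Module.isTorsionFree_iff_algebraMap_injective.mpr hinj
  have hvint : IsIntegral A v := Algebra.IsIntegral.isIntegral v
  set g := minpoly A v with hgdef
  have hgmonic : g.Monic := minpoly.monic hvint
  have hgdvd : g ∣ X ^ n - C u :=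
    minpoly.isIntegrallyClosed_dvd hvint (by simp [hv])
  -- reduction of `g` mod the maximal ideal of `A`
  set gbar : (ResidueField A)[X] := g.map (residue A) with hgbardef
  have hgbarmonic : gbar.Monic := hgmonic.map _
  have hgbardvd : gbar ∣ X ^ n - C (residue A u) := by
    have := Polynomial.map_dvd (residue A) hgdvd
    rwa [Polynomial.map_sub, Polynomial.map_pow, map_X, map_C] at this
  have hu0 : residue A u ≠ 0 := (hu.map (residue A)).ne_zero
  have hsq : Squarefree gbar :=
    (Polynomial.separable_X_pow_sub_C _ hnk hu0).squarefree.squarefree_of_dvd hgbardvd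
  -- `gbar` has the residue of `v` as a root, coming from `A`
  obtain ⟨a, ha⟩ := hres v
  have hroot : gbar.IsRoot (residue A a) := by
    have h1 : Polynomial.aeval v g = 0 := minpoly.aeval A v
    have h2 : (g.map (algebraMap A B)).eval v - (g.map (algebraMap A B)).eval (algebraMap A B a)
        ∈ maximalIdeal B := by
      obtain ⟨c, hc⟩ := Polynomial.sub_dvd_eval_sub v (algebraMap A B a) (g.map (algebraMap A B))
      rw [hc]
      exact Ideal.mul_mem_right _ _ ha
    rw [Polynomial.eval_map, ← Polynomial.aeval_def, h1, zero_sub, neg_mem_iff,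
      Polynomial.eval_map, Polynomial.eval₂_at_apply] at h2
    have h3 : g.eval a ∈ maximalIdeal A := by
      by_contra h
      have hua : IsUnit (g.eval a) := not_not.mp fun hnu =>
        h ((IsLocalRing.mem_maximalIdeal _).mpr (mem_nonunits_iff.mpr hnu))
      exact (IsLocalRing.maximalIdeal.isMaximal B).ne_top
        (Ideal.eq_top_of_isUnit_mem _ h2 (hua.map (algebraMap A B)))
    rw [Polynomial.IsRoot, Polynomial.eval_map, Polynomial.eval₂_at_apply]
    exact Ideal.Quotient.eq_zero_iff_mem.mpr h3
  have hXa : (X - C (residue A a)) ∣ gbar := Polynomial.dvd_iff_isRoot.mpr hroot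
  -- `gbar` has degree 1
  obtain ⟨t, ht⟩ := hXa
  have htunit : IsUnit t := by
    by_contra htu
    obtain ⟨φ, hφm, hφi, hφd⟩ := Polynomial.exists_monic_irreducible_factor t htu
    have hφgbar : φ ∣ gbar := hφd.trans ⟨X - C (residue A a), by rw [ht]; ring⟩
    have hφeq : φ = X - C (residue A a) :=
      minpoly_red_unique_factor hinj v φ (X - C (residue A a)) hφi
        (irreducible_X_sub_C _) hφm (monic_X_sub_C _) hφgbar (Dvd.intro t ht.symm)
    rw [hφeq] at hφd
    obtain ⟨s, hs⟩ := hφd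
    have hsqdvd : (X - C (residue A a)) * (X - C (residue A a)) ∣ gbar :=
      ⟨s, by rw [ht, hs]; ring⟩
    exact (Polynomial.not_isUnit_X_sub_C _) (hsq _ hsqdvd)
  have hdeg : g.natDegree = 1 := by
    have h1 : gbar.natDegree = 1 := by
      rw [ht, Polynomial.natDegree_mul (X_sub_C_ne_zero _) htunit.ne_zero,
        natDegree_X_sub_C, Polynomial.natDegree_eq_zero_of_isUnit htunit]
    rwa [hgbardef, hgmonic.natDegree_map] at h1
  -- conclude
  have hgeq : g = X + C (g.coeff 0) := by
    have h2 := Polynomial.eq_X_add_C_of_natDegree_le_one (le_of_eq hdeg)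
    have h3 : g.coeff 1 = 1 := by
      have h4 := hgmonic.leadingCoeff
      rwa [Polynomial.leadingCoeff, hdeg] at h4
    rwa [h3, map_one, one_mul] at h2
  have hveq : v = algebraMap A B (-(g.coeff 0)) := by
    have h4 : Polynomial.aeval v g = 0 := minpoly.aeval A v
    rw [hgeq] at h4
    simp only [map_add, aeval_X, aeval_C] at h4
    rw [map_neg]
    linear_combination h4
  refine ⟨-(g.coeff 0), hinj ?_⟩
  rw [map_pow, ← hveq, hv]

end AuxFactor

section ResSurj

/-- For an extension of DVRs which is totally ramified of degree `n = [L : K]`,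
the residue fields coincide. -/
theorem residue_surj_of_totally_ramified
    {A B K L : Type*} [CommRing A] [CommRing B] [IsDomain A] [IsDomain B]
    [IsDiscreteValuationRing A] [IsDiscreteValuationRing B]
    [Field K] [Field L] [Algebra A K] [IsFractionRing A K] [Algebra B L] [IsFractionRing B L]
    [Algebra K L] [Algebra A B] [Algebra A L] [IsScalarTower A B L] [IsScalarTower A K L]
    [Module.Finite A B]
    {n : ℕ} (hn0 : n ≠ 0) (hfin : Module.finrank K L = n)
    (he : Ideal.map (algebraMap A B) (maximalIdeal A) = maximalIdeal B ^ n) :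
    ∀ x : B, ∃ a : A, x - algebraMap A B a ∈ maximalIdeal B := by
  classical
  have hp0 : maximalIdeal A ≠ ⊥ := IsDiscreteValuationRing.not_a_field A
  have hP0 : maximalIdeal B ≠ ⊥ := IsDiscreteValuationRing.not_a_field B
  have hPmax := IsLocalRing.maximalIdeal.isMaximal B
  have hcomap : Ideal.comap (algebraMap A B) (maximalIdeal B) = maximalIdeal A := by
    have hle : maximalIdeal A ≤ Ideal.comap (algebraMap A B) (maximalIdeal B) := by
      intro x hx
      rw [Ideal.mem_comap]
      have hmem : algebraMap A B x ∈ Ideal.map (algebraMap A B) (maximalIdeal A) :=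
        Ideal.mem_map_of_mem _ hx
      rw [he] at hmem
      exact Ideal.pow_le_self hn0 hmem
    exact ((IsLocalRing.maximalIdeal.isMaximal A).eq_of_le
      (Ideal.comap_ne_top _ hPmax.ne_top) hle).symm
  haveI hlies : (maximalIdeal B).LiesOver (maximalIdeal A) := ⟨hcomap.symm⟩
  -- the ramification index is `n`
  have hidx : Ideal.ramificationIdx' (maximalIdeal A) (maximalIdeal B) = n := by
    refine Ideal.ramificationIdx'_spec (by rw [he]) ?_
    rw [he]
    intro hle
    have hdvd : maximalIdeal B ^ (n + 1) ∣ maximalIdeal B ^ n := Ideal.dvd_iff_le.mpr hle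
    rw [pow_succ] at hdvd
    have hMne : (maximalIdeal B : Ideal B) ^ n ≠ 0 := by
      refine pow_ne_zero _ ?_
      rwa [Ideal.zero_eq_bot]
    have hone : (maximalIdeal B : Ideal B) ∣ 1 :=
      (mul_dvd_mul_iff_left hMne).mp (by simpa using hdvd)
    exact hPmax.ne_top (Ideal.isUnit_iff.mp (isUnit_of_dvd_one hone))
  -- the fundamental identity
  have hsum := Ideal.sum_ramification_inertia (S := B) (p := maximalIdeal A) K L hp0
  have hPprime : Prime (maximalIdeal B : Ideal B) := Ideal.prime_of_isPrime hP0 hPmax.isPrime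
  rw [hfin] at hsum
  obtain ⟨T, hT, hsum⟩ :
      ∃ T : Finset (Ideal B),
        (∀ Q ∈ T, Q = maximalIdeal B) ∧
          (∑ P ∈ T, Ideal.ramificationIdx' (maximalIdeal A) P *
            Ideal.inertiaDeg' (maximalIdeal A) P) = n := by
    refine ⟨_, ?_, hsum⟩
    intro Q hQ
    simp only [Multiset.mem_toFinset] at hQ
    have hQprime : Prime Q := UniqueFactorizationMonoid.prime_of_factor _ hQ
    have hQdvd : Q ∣ maximalIdeal B ^ n := by
      have hh := UniqueFactorizationMonoid.dvd_of_mem_factors hQ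
      rwa [he] at hh
    obtain ⟨c, hc⟩ := hQprime.dvd_of_dvd_pow hQdvd
    rcases hPprime.irreducible.isUnit_or_isUnit hc with h | h
    · exact absurd h hQprime.not_isUnit
    · exact associated_iff_eq.mp ⟨h.unit, by rw [IsUnit.unit_spec]; exact hc.symm⟩
  have hTsing : T = {maximalIdeal B} := by
    rw [Finset.eq_singleton_iff_nonempty_unique_mem]
    refine ⟨?_, hT⟩
    rw [Finset.nonempty_iff_ne_empty]
    rintro rfl
    rw [Finset.sum_empty] at hsum
    exact hn0 hsum.symm
  rw [hTsing, Finset.sum_singleton, hidx] at hsum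
  have hf1 : Ideal.inertiaDeg' (maximalIdeal A) (maximalIdeal B) = 1 :=
    Nat.eq_of_mul_eq_mul_left (Nat.pos_of_ne_zero hn0) (by rw [hsum, mul_one])
  rw [Ideal.inertiaDeg_algebraMap] at hf1
  haveI : Nontrivial (B ⧸ maximalIdeal B) := Ideal.Quotient.nontrivial_iff.mpr hPmax.ne_top
  letI : Field (A ⧸ maximalIdeal A) := Ideal.Quotient.field _
  have hbot : (⊥ : Subalgebra (A ⧸ maximalIdeal A) (B ⧸ maximalIdeal B)) = ⊤ :=
    Subalgebra.bot_eq_top_of_finrank_eq_one hf1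
  intro x
  have hx : Ideal.Quotient.mk (maximalIdeal B) x ∈
      (⊤ : Subalgebra (A ⧸ maximalIdeal A) (B ⧸ maximalIdeal B)) := trivial
  rw [← hbot, Algebra.mem_bot] at hx
  obtain ⟨y, hy⟩ := hx
  obtain ⟨a, rfl⟩ := Ideal.Quotient.mk_surjective y
  refine ⟨a, Ideal.Quotient.eq_zero_iff_mem.mp ?_⟩
  rw [map_sub, sub_eq_zero, ← hy]
  rfl

end ResSurj

set_option maxHeartbeats 1000000
set_option synthInstance.maxHeartbeats 200000

/-- For a totally ramified, tamely ramified degree `n` extension `E/F`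
of a finite extension `F` of `ℚ_p` (`p` odd), a unit of `F` that is an `n`-th power
of a unit of `E` is already an `n`-th power of a unit of `F`:
`(𝒪_E^×)^n ∩ 𝒪_F^× = (𝒪_F^×)^n`. -/
theorem units_pow_inter_eq_pow
    {p : ℕ} [Fact p.Prime] (hp2 : p ≠ 2)
    {F E : Type*} [Field F] [Field E]
    [Algebra ℚ_[p] F] [FiniteDimensional ℚ_[p] F]
    [Algebra ℤ_[p] F] [IsScalarTower ℤ_[p] ℚ_[p] F]
    [Algebra ℚ_[p] E] [FiniteDimensional ℚ_[p] E]
    [Algebra ℤ_[p] E] [IsScalarTower ℤ_[p] ℚ_[p] E]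
    [Algebra F E] [IsScalarTower ℚ_[p] F E]
    [IsDiscreteValuationRing ↥(integralClosure ℤ_[p] F)]
    [IsDiscreteValuationRing ↥(integralClosure ℤ_[p] E)]
    {n : ℕ} (hn : Module.finrank F E = n)
    (htame : ¬ (p ∣ n))
    (htotal : ∀ πF : ↥(integralClosure ℤ_[p] F), Irreducible πF →
      ∀ πE : ↥(integralClosure ℤ_[p] E), Irreducible πE →
      ∃ u : (↥(integralClosure ℤ_[p] E))ˣ,
        algebraMap F E (πF : F) = ((πE : E)) ^ n * ((u : ↥(integralClosure ℤ_[p] E)) : E)) :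
    ∀ u : (↥(integralClosure ℤ_[p] F))ˣ,
      (∃ v : (↥(integralClosure ℤ_[p] E))ˣ,
        algebraMap F E (((u : ↥(integralClosure ℤ_[p] F))) : F) =
          (((v : ↥(integralClosure ℤ_[p] E))) : E) ^ n) ↔
      ∃ w : (↥(integralClosure ℤ_[p] F))ˣ, u = w ^ n := by
  classical
  haveI hZFE : IsScalarTower ℤ_[p] F E := IsScalarTower.of_algebraMap_eq fun x => by
    rw [IsScalarTower.algebraMap_apply ℤ_[p] ℚ_[p] E, IsScalarTower.algebraMap_apply ℚ_[p] F E,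
      ← IsScalarTower.algebraMap_apply ℤ_[p] ℚ_[p] F]
  haveI : CharZero F := charZero_of_injective_algebraMap (algebraMap ℚ_[p] F).injective
  haveI : FiniteDimensional F E := FiniteDimensional.right ℚ_[p] F E
  haveI : IsFractionRing (↥(integralClosure ℤ_[p] F)) F :=
    integralClosure.isFractionRing_of_finite_extension ℚ_[p] F
  haveI : IsFractionRing (↥(integralClosure ℤ_[p] E)) E :=
    integralClosure.isFractionRing_of_finite_extension ℚ_[p] E
  letI : Algebra (↥(integralClosure ℤ_[p] F)) E :=
    ((algebraMap F E).comp (algebraMap (↥(integralClosure ℤ_[p] F)) F)).toAlgebra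
  haveI : @IsScalarTower (↥(integralClosure ℤ_[p] F)) F E Algebra.toSMul Algebra.toSMul
      Algebra.toSMul :=
    IsScalarTower.of_algebraMap_eq fun x => rfl
  have hmem : ∀ a : ↥(integralClosure ℤ_[p] F),
      algebraMap F E (a : F) ∈ integralClosure ℤ_[p] E := fun a =>
    IsIntegral.map (IsScalarTower.toAlgHom ℤ_[p] F E) a.2
  letI : Algebra (↥(integralClosure ℤ_[p] F)) (↥(integralClosure ℤ_[p] E)) :=
    RingHom.toAlgebra
    { toFun := fun a => ⟨algebraMap F E (a : F), hmem a⟩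
      map_one' := Subtype.ext (by simp)
      map_mul' := fun x y => Subtype.ext (by push_cast; simp)
      map_zero' := Subtype.ext (by simp)
      map_add' := fun x y => Subtype.ext (by push_cast; simp) }
  haveI : @IsScalarTower (↥(integralClosure ℤ_[p] F)) (↥(integralClosure ℤ_[p] E)) E
      Algebra.toSMul Algebra.toSMul Algebra.toSMul :=
    IsScalarTower.of_algebraMap_eq fun x => rfl
  haveI : @IsScalarTower ℤ_[p] (↥(integralClosure ℤ_[p] F)) (↥(integralClosure ℤ_[p] E))
      Algebra.toSMul Algebra.toSMul Algebra.toSMul :=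
    by
    apply IsScalarTower.of_algebraMap_eq
    intro x
    apply Subtype.ext
    have h1 : ((algebraMap ℤ_[p] (↥(integralClosure ℤ_[p] E)) x :
        ↥(integralClosure ℤ_[p] E)) : E) = algebraMap ℤ_[p] E x := rfl
    have h2 : ((algebraMap (↥(integralClosure ℤ_[p] F)) (↥(integralClosure ℤ_[p] E))
        (algebraMap ℤ_[p] (↥(integralClosure ℤ_[p] F)) x) : ↥(integralClosure ℤ_[p] E)) : E)
        = algebraMap F E ((algebraMap ℤ_[p] (↥(integralClosure ℤ_[p] F)) x :
          ↥(integralClosure ℤ_[p] F)) : F) := rfl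
    have h3 : ((algebraMap ℤ_[p] (↥(integralClosure ℤ_[p] F)) x :
        ↥(integralClosure ℤ_[p] F)) : F) = algebraMap ℤ_[p] F x := rfl
    rw [h1, h2, h3]
    exact IsScalarTower.algebraMap_apply ℤ_[p] F E x
  haveI : @IsScalarTower ℤ_[p] (↥(integralClosure ℤ_[p] F)) E Algebra.toSMul Algebra.toSMul
      Algebra.toSMul :=
    IsScalarTower.of_algebraMap_eq fun x => by
      rw [IsScalarTower.algebraMap_apply ℤ_[p] F E x]; rfl
  have hABinj : Function.Injective
      (algebraMap (↥(integralClosure ℤ_[p] F)) (↥(integralClosure ℤ_[p] E))) :=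
    fun x y h => Subtype.ext ((algebraMap F E).injective (congrArg Subtype.val h))
  haveI : Algebra.IsIntegral ℤ_[p] (↥(integralClosure ℤ_[p] F)) :=
    ⟨fun a => (isIntegral_algebraMap_iff
      (show Function.Injective (algebraMap (↥(integralClosure ℤ_[p] F)) F) from
        fun _ _ h => Subtype.ext h)).mp a.2⟩
  haveI : Algebra.IsIntegral (↥(integralClosure ℤ_[p] F)) (↥(integralClosure ℤ_[p] E)) := by
    refine ⟨fun b => ?_⟩
    have h1 : IsIntegral ℤ_[p] b := (isIntegral_algebraMap_iff
      (show Function.Injective (algebraMap (↥(integralClosure ℤ_[p] E)) E) from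
        fun _ _ h => Subtype.ext h)).mp b.2
    exact IsIntegral.tower_top (R := ℤ_[p]) h1
  haveI : IsIntegralClosure (↥(integralClosure ℤ_[p] E)) (↥(integralClosure ℤ_[p] F)) E := by
    refine ⟨fun _ _ h => Subtype.ext h, fun {x} => ⟨fun hx => ?_, fun hy => ?_⟩⟩
    · exact ⟨⟨x, isIntegral_trans (R := ℤ_[p]) x hx⟩, rfl⟩
    · obtain ⟨y, hy'⟩ := hy
      exact hy' ▸ IsIntegral.tower_top (R := ℤ_[p]) y.2
  haveI : Module.Finite (↥(integralClosure ℤ_[p] F)) (↥(integralClosure ℤ_[p] E)) :=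
    IsIntegralClosure.finite (↥(integralClosure ℤ_[p] F)) F E (↥(integralClosure ℤ_[p] E))
  -- basic numerology
  have hn0 : n ≠ 0 := fun h => htame (h ▸ dvd_zero p)
  -- total ramification in ideal-theoretic form
  obtain ⟨πF, hπF⟩ := IsDiscreteValuationRing.exists_irreducible (↥(integralClosure ℤ_[p] F))
  obtain ⟨πE, hπE⟩ := IsDiscreteValuationRing.exists_irreducible (↥(integralClosure ℤ_[p] E))
  obtain ⟨u₀, hu₀⟩ := htotal πF hπF πE hπE
  have hπFB : algebraMap (↥(integralClosure ℤ_[p] F)) (↥(integralClosure ℤ_[p] E)) πF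
      = πE ^ n * (u₀ : ↥(integralClosure ℤ_[p] E)) := by
    apply Subtype.ext
    push_cast
    exact hu₀
  have he : Ideal.map (algebraMap (↥(integralClosure ℤ_[p] F)) (↥(integralClosure ℤ_[p] E)))
      (maximalIdeal (↥(integralClosure ℤ_[p] F)))
      = maximalIdeal (↥(integralClosure ℤ_[p] E)) ^ n := by
    rw [hπF.maximalIdeal_eq, Ideal.map_span, Set.image_singleton, hπFB,
      hπE.maximalIdeal_eq, Ideal.span_singleton_pow,
      Ideal.span_singleton_mul_right_unit u₀.isUnit]
  -- `p` is not invertible in the ring of integers of `F`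
  have hpA : ((p : ℕ) : ↥(integralClosure ℤ_[p] F)) ∈
      maximalIdeal (↥(integralClosure ℤ_[p] F)) := by
    rw [IsLocalRing.mem_maximalIdeal]
    intro hunit
    obtain ⟨t, ht⟩ := hunit.exists_right_inv
    have hpQ : ((p : ℕ) : ℚ_[p]) ≠ 0 :=
      Nat.cast_ne_zero.mpr (Fact.out (p := p.Prime)).ne_zero
    have htF : algebraMap ℚ_[p] F ((p : ℕ) : ℚ_[p]) * (t : F) = 1 := by
      rw [map_natCast]
      exact_mod_cast congrArg Subtype.val ht
    have htval : (t : F) = algebraMap ℚ_[p] F (((p : ℕ) : ℚ_[p])⁻¹) := by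
      rw [map_inv₀]
      exact eq_inv_of_mul_eq_one_left (by rw [mul_comm] at htF; exact htF)
    have hint : IsIntegral ℤ_[p] (((p : ℕ) : ℚ_[p])⁻¹) := by
      have h2 : IsIntegral ℤ_[p] (t : F) := t.2
      rw [htval] at h2
      exact (isIntegral_algebraMap_iff (algebraMap ℚ_[p] F).injective).mp h2
    obtain ⟨z, hz⟩ := IsIntegrallyClosed.isIntegral_iff.mp hint
    have hz1 : z * ((p : ℕ) : ℤ_[p]) = 1 := by
      apply IsFractionRing.injective ℤ_[p] ℚ_[p]
      rw [map_mul, hz, map_natCast, map_one, inv_mul_cancel₀ hpQ]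
    exact PadicInt.prime_p.not_isUnit (IsUnit.of_mul_eq_one _ (by rw [mul_comm]; exact hz1))
  have hnk : ((n : ℕ) : ResidueField (↥(integralClosure ℤ_[p] F))) ≠ 0 := by
    intro hcast
    haveI := ringChar.charP (ResidueField (↥(integralClosure ℤ_[p] F)))
    have hchar : ((p : ℕ) : ResidueField (↥(integralClosure ℤ_[p] F))) = 0 := by
      have : residue (↥(integralClosure ℤ_[p] F)) ((p : ℕ) : ↥(integralClosure ℤ_[p] F)) = 0 :=
        Ideal.Quotient.eq_zero_iff_mem.mpr hpA
      rwa [map_natCast] at this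
    have h1 := ringChar.dvd hchar
    have h2 := ringChar.dvd hcast
    rcases CharP.char_is_prime_or_zero (ResidueField (↥(integralClosure ℤ_[p] F)))
        (ringChar (ResidueField (↥(integralClosure ℤ_[p] F)))) with hq | hq
    · have hrc : ringChar (ResidueField (↥(integralClosure ℤ_[p] F))) = p :=
        (Nat.prime_dvd_prime_iff_eq hq (Fact.out (p := p.Prime))).mp h1
      exact htame (hrc ▸ h2)
    · rw [hq] at h1
      exact absurd (Nat.eq_zero_of_zero_dvd h1) (Fact.out (p := p.Prime)).ne_zero
  have hres := residue_surj_of_totally_ramified (K := F) (L := E) hn0 hn he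
  intro u
  constructor
  · rintro ⟨v, hv⟩
    have hv' : (v : ↥(integralClosure ℤ_[p] E)) ^ n
        = algebraMap (↥(integralClosure ℤ_[p] F)) (↥(integralClosure ℤ_[p] E))
          (u : ↥(integralClosure ℤ_[p] F)) := by
      apply Subtype.ext
      rw [SubmonoidClass.coe_pow]
      exact hv.symm
    obtain ⟨w, hw⟩ := exists_pow_eq_of_pow_eq hABinj hn0 hnk hres _ u.isUnit _ hv'
    have hwu : IsUnit w := (isUnit_pow_iff hn0).mp (hw ▸ u.isUnit)
    refine ⟨hwu.unit, Units.ext ?_⟩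
    rw [Units.val_pow_eq_pow_val, IsUnit.unit_spec, hw]
  · rintro ⟨w, rfl⟩
    refine ⟨Units.map (algebraMap (↥(integralClosure ℤ_[p] F))
      (↥(integralClosure ℤ_[p] E)) : _ →+* _).toMonoidHom w, ?_⟩
    show algebraMap F E (((w ^ n : _ˣ) : ↥(integralClosure ℤ_[p] F)) : F)
      = ((algebraMap (↥(integralClosure ℤ_[p] F)) (↥(integralClosure ℤ_[p] E))
          (w : ↥(integralClosure ℤ_[p] F)) : ↥(integralClosure ℤ_[p] E)) : E) ^ n
    rw [Units.val_pow_eq_pow_val, SubmonoidClass.coe_pow, map_pow]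
    rfl
end

section
/- Let F be a field of characteristic not 2, n > 1, and τ ∈ F such that x^n − τ is irreducible over F. Let E = F[ω] where ω^n = τ. Then the F-linear embedding of E into M_n(F) given by the regular representation with respect to the basis 1, ω, ω², …, ω^{n−1} has image consisting of matrices X satisfying J·Xᵀ·J = X, where J is the antidiagonal permutation matrix (i.e., every matrix in the image is symmetric about its antidiagonal). -/
open Matrix

/-- The antidiagonal matrix `J`. -/
def Jmat (n : ℕ) (F : Type*) [Field F] : Matrix (Fin n) (Fin n) F :=
  Matrix.of fun i j => if j = i.rev then 1 else 0

lemma Jmat_mul {n : ℕ} {F : Type*} [Field F] (A : Matrix (Fin n) (Fin n) F) (i j : Fin n) :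
    (Jmat n F * A) i j = A i.rev j := by
  simp [Jmat, Matrix.mul_apply]

lemma mul_Jmat {n : ℕ} {F : Type*} [Field F] (A : Matrix (Fin n) (Fin n) F) (i j : Fin n) :
    (A * Jmat n F) i j = A i j.rev := by
  have : ∀ k : Fin n, (j = k.rev) ↔ (k = j.rev) := by
    intro k
    constructor
    · rintro rfl; rw [Fin.rev_rev]
    · rintro rfl; rw [Fin.rev_rev]
  simp only [Jmat, Matrix.mul_apply, Matrix.of_apply, this]
  simp

/-- If `x^n - τ` is irreducible over `F` (char `F ≠ 2`, `n > 1`) and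
`E = F[ω]` with `ω^n = τ`, then the regular-representation embedding of `E` into
`M_n(F)` with respect to the basis `1, ω, …, ω^(n-1)` is `J`-symmetric:
`J ⬝ Xᵀ ⬝ J = X` for every matrix `X` in the image. -/
theorem regular_embedding_J_symmetric
    {F E : Type*} [Field F] [Field E] [Algebra F E]
    (hF : ringChar F ≠ 2) {n : ℕ} (hn : 1 < n) (τ : F)
    (hirr : Irreducible (Polynomial.X ^ n - Polynomial.C τ : Polynomial F))
    (ω : E) (hω : ω ^ n = algebraMap F E τ)
    (b : Module.Basis (Fin n) F E) (hb : ∀ i : Fin n, b i = ω ^ (i : ℕ)) :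
    ∀ x : E,
      Jmat n F * (Algebra.leftMulMatrix b x)ᵀ * Jmat n F = Algebra.leftMulMatrix b x := by
  have key : ∀ k : Fin n, Jmat n F * (Algebra.leftMulMatrix b (b k))ᵀ * Jmat n F
      = Algebra.leftMulMatrix b (b k) := by
    intro k
    have ent : ∀ p q : Fin n, Algebra.leftMulMatrix b (b k) p q =
        if ((k : ℕ) + q < n) then (if (p : ℕ) = (k : ℕ) + q then 1 else 0)
        else τ * (if (p : ℕ) + n = (k : ℕ) + q then 1 else 0) := by
      intro p q
      rw [Algebra.leftMulMatrix_eq_repr_mul, hb, hb, ← pow_add]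
      by_cases h : (k : ℕ) + q < n
      · have hpow : ω ^ ((k : ℕ) + q) = b ⟨(k : ℕ) + q, h⟩ := by rw [hb]
        rw [hpow, b.repr_self, if_pos h]
        simp [Finsupp.single_apply, Fin.ext_iff, eq_comm]
      · push_neg at h
        have hlt : (k : ℕ) + q - n < n := by
          have := k.isLt; have := q.isLt; omega
        have hpow : ω ^ ((k : ℕ) + q) = τ • b ⟨(k : ℕ) + q - n, hlt⟩ := by
          rw [hb, Algebra.smul_def, ← hω, ← pow_add]
          simp only [Fin.val_mk]
          congr 1
          omega
        rw [hpow, _root_.map_smul, if_neg (Nat.not_lt.mpr h)]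
        simp only [Finsupp.smul_apply, b.repr_self, Finsupp.single_apply, Fin.ext_iff]
        have : ((p : ℕ) + n = (k : ℕ) + q) ↔ (((k : ℕ) + q - n : ℕ) = (p : ℕ)) := by
          have := p.isLt; omega
        simp only [this]
        simp [smul_eq_mul]
    ext i j
    rw [mul_Jmat, Jmat_mul, Matrix.transpose_apply, ent, ent]
    simp only [Fin.val_rev]
    have hi := i.isLt
    have hj := j.isLt
    by_cases h1 : (k : ℕ) + j < n <;> by_cases h2 : (k : ℕ) + (n - ((i : ℕ) + 1)) < n
    · rw [if_pos h1, if_pos h2]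
      simp only [show ((n - ((j : ℕ) + 1) : ℕ) = (k : ℕ) + (n - ((i : ℕ) + 1))) ↔ ((i : ℕ) = (k : ℕ) + j)
          from by omega]
    · rw [if_pos h1, if_neg h2, if_neg (by omega), if_neg (by omega), mul_zero]
    · rw [if_neg h1, if_pos h2, if_neg (by omega), if_neg (by omega), mul_zero]
    · rw [if_neg h1, if_neg h2]
      simp only [show ((n - ((j : ℕ) + 1) : ℕ) + n = (k : ℕ) + (n - ((i : ℕ) + 1))) ↔
          ((i : ℕ) + n = (k : ℕ) + j) from by omega]
  intro x
  let L : E →ₗ[F] Matrix (Fin n) (Fin n) F :=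
    { toFun := fun y => Jmat n F * (Algebra.leftMulMatrix b y)ᵀ * Jmat n F
      map_add' := fun y z => by
        simp [map_add, Matrix.transpose_add, Matrix.mul_add, Matrix.add_mul]
      map_smul' := fun c y => by
        simp [_root_.map_smul, Matrix.transpose_smul, Matrix.mul_smul, Matrix.smul_mul] }
  have hL : L = (Algebra.leftMulMatrix b).toLinearMap := Module.Basis.ext b key
  exact DFunLike.congr_fun hL x
end

section
/- Let F ⊂ L ⊂ E be a tower of fields with [L:F] = r, [E:L] = s, n = rs. Suppose L is embedded in M_r(F) via an F-embedding whose image consists of J_r-symmetric matrices, and E is embedded in M_s(L) via an L-embedding whose image consists of J_s-symmetric matrices. Then the composite embedding of E in M_n(F) = M_s(M_r(F)) has image consisting of J_n-symmetric matrices. -/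
open Matrix

lemma perm_conj_apply {ι : Type*} [Fintype ι] [DecidableEq ι] {K : Type*} [Field K]
    (σ : ι → ι) (hσ : Function.Involutive σ)
    (J : Matrix ι ι K) (hJ : ∀ a b, J a b = if b = σ a then 1 else 0)
    (A : Matrix ι ι K) (a b : ι) :
    (J * Aᵀ * J) a b = A (σ b) (σ a) := by
  simp only [Matrix.mul_apply, hJ, Matrix.transpose_apply,
    ite_mul, one_mul, zero_mul, Finset.sum_ite_eq', Finset.mem_univ, if_true,
    mul_ite, mul_one, mul_zero]
  have : ∀ x : ι, (if b = σ x then A x (σ a) else 0)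
      = if x = σ b then A (σ b) (σ a) else 0 := by
    intro x
    by_cases h : x = σ b
    · subst h; simp [hσ b]
    · rw [if_neg, if_neg h]
      intro hl; exact h (by simp [hl, hσ x])
  simp [this]

/-- If `L` is embedded `J_r`-symmetrically in `M_r(F)` and `E` is embedded
`J_s`-symmetrically in `M_s(L)`, then the composite embedding of `E` in
`M_n(F) = M_s(M_r(F))` (with `n = rs`) is `J_n`-symmetric.  Here `M_n(F)` is realized
as matrices indexed by `Fin s × Fin r` (lexicographic identification with `Fin n`),
under which `J_n` sends `(i,k)` to `(i.rev, k.rev)`. -/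
theorem composite_embedding_J_symmetric
    {F L E : Type*} [Field F] [Field L] [Field E]
    [Algebra F L] [Algebra L E]
    (hF : ringChar F ≠ 2)
    {r s : ℕ} (hr : Module.finrank F L = r) (hs : Module.finrank L E = s)
    (ι : L →ₐ[F] Matrix (Fin r) (Fin r) F)
    (hι : ∀ y : L, Jmat r F * (ι y)ᵀ * Jmat r F = ι y)
    (κ : E →ₐ[L] Matrix (Fin s) (Fin s) L)
    (hκ : ∀ x : E, Jmat s L * (κ x)ᵀ * Jmat s L = κ x)
    -- the composite embedding, written entrywise
    (C : E → Matrix (Fin s × Fin r) (Fin s × Fin r) F)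
    (hC : ∀ (x : E) (i j : Fin s) (k l : Fin r), C x (i, k) (j, l) = ι (κ x i j) k l)
    -- the antidiagonal matrix `J_n` on the product index
    (Jn : Matrix (Fin s × Fin r) (Fin s × Fin r) F)
    (hJn : ∀ a b : Fin s × Fin r, Jn a b = if b = (a.1.rev, a.2.rev) then 1 else 0) :
    ∀ x : E, Jn * (C x)ᵀ * Jn = C x := by
  intro x
  have hι' : ∀ (y : L) (k l : Fin r), ι y l.rev k.rev = ι y k l := by
    intro y k l
    conv_rhs => rw [← hι y]
    rw [perm_conj_apply Fin.rev Fin.rev_rev (Jmat r F) (fun a b => rfl)]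
  have hκ' : ∀ (j i : Fin s), κ x j.rev i.rev = κ x i j := by
    intro j i
    conv_rhs => rw [← hκ x]
    rw [perm_conj_apply Fin.rev Fin.rev_rev (Jmat s L) (fun a b => rfl)]
  ext ⟨i, k⟩ ⟨j, l⟩
  rw [perm_conj_apply (fun p => (p.1.rev, p.2.rev))
    (fun p => by simp) Jn hJn]
  simp only [hC]
  rw [hκ', hι']
end

section
/- Let E/F be a degree n field extension (char F ≠ 2) embedded in M_n(F) via a J-symmetric embedding x ↦ x̲. Then the set of symmetric matrices ν ∈ GL_n(F) such that x̲ = ν^{-1}·x̲ᵀ·ν for every x ∈ E is exactly J·E̲^× (the set of products Jx̲ for x ∈ E^×). Moreover, for x ∈ E^×, det(J·x̲) = (−1)^{n(n−1)/2}·N_{E/F}(x). -/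
open Matrix

namespace NuAux

open Equiv

/-- `Fin.castSucc` as an equivalence onto the subtype of `Fin (n+1)` with value `< n`. -/
def castSuccEquivSubtype (n : ℕ) : Fin n ≃ {i : Fin (n + 1) // (i : ℕ) < n} where
  toFun i := ⟨i.castSucc, by simpa using i.isLt⟩
  invFun j := ⟨(j : Fin (n + 1)).val, j.2⟩
  left_inv i := by ext; simp
  right_inv j := by ext; simp

lemma revPerm_succ (n : ℕ) :
    (Fin.revPerm : Perm (Fin (n + 1))) =
      finRotate (n + 1) *
        ((Fin.revPerm : Perm (Fin n)).extendDomain (castSuccEquivSubtype n)) := by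
  ext i
  induction i using Fin.lastCases with
  | last =>
      rw [Perm.mul_apply, Equiv.Perm.extendDomain_apply_not_subtype _ _ (by simp),
        finRotate_last]
      simp
  | cast j =>
      have h1 : ((Fin.revPerm : Perm (Fin n)).extendDomain (castSuccEquivSubtype n))
          j.castSucc = (Fin.rev j).castSucc := by
        rw [Equiv.Perm.extendDomain_apply_subtype _ _ (by simpa using j.isLt)]
        simp [castSuccEquivSubtype]
      rw [Perm.mul_apply, h1]
      have hne : (Fin.rev j).castSucc ≠ Fin.last n := by
        simp [Fin.ext_iff, Fin.val_rev]
        omega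
      have := j.isLt
      rw [coe_finRotate, if_neg hne]
      simp [Fin.val_rev]
      omega

lemma sign_revPerm (n : ℕ) :
    Equiv.Perm.sign (Fin.revPerm : Perm (Fin n)) = (-1) ^ (n * (n - 1) / 2) := by
  induction n with
  | zero =>
      have : (Fin.revPerm : Perm (Fin 0)) = 1 := Subsingleton.elim _ _
      simp [this]
  | succ n ih =>
      rw [revPerm_succ, Equiv.Perm.sign_mul, sign_finRotate, Equiv.Perm.sign_extendDomain, ih,
        ← pow_add, Nat.triangle_succ]
      congr 1
      omega

lemma Jmat_eq_permMatrix (n : ℕ) (F : Type*) [Field F] :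
    Jmat n F = (Fin.revPerm : Perm (Fin n)).permMatrix F := by
  ext i j
  simp [Jmat, Equiv.Perm.permMatrix, PEquiv.toMatrix, Equiv.toPEquiv, eq_comm]

lemma det_Jmat (n : ℕ) (F : Type*) [Field F] :
    (Jmat n F).det = (-1) ^ (n * (n - 1) / 2) := by
  rw [Jmat_eq_permMatrix, Matrix.det_permutation, sign_revPerm]
  push_cast
  simp

lemma Jmat_transpose (n : ℕ) (F : Type*) [Field F] : (Jmat n F)ᵀ = Jmat n F := by
  ext i j
  simp only [Jmat, Matrix.transpose_apply, Matrix.of_apply]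
  congr 1
  simp only [eq_iff_iff]
  constructor <;> intro h <;> simp [h]

lemma Jmat_mul_Jmat (n : ℕ) (F : Type*) [Field F] : Jmat n F * Jmat n F = 1 := by
  ext i j
  rw [Matrix.mul_apply, Finset.sum_eq_single i.rev (fun b _ hb => by simp [Jmat, hb]) (by simp)]
  simp [Jmat, Matrix.one_apply, Fin.rev_rev, eq_comm]

variable {F E : Type*} [Field F] [Field E] [Algebra F E] [FiniteDimensional F E]

theorem centralizer_det {n : ℕ} (hn : Module.finrank F E = n)
    (ι : E →ₐ[F] Matrix (Fin n) (Fin n) F) :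
    (∀ B : Matrix (Fin n) (Fin n) F, (∀ x : E, B * ι x = ι x * B) → ∃ x : E, B = ι x) ∧
      (∀ x : E, (ι x).det = Algebra.norm F x) := by
  classical
  have hnpos : 0 < n := hn ▸ Module.finrank_pos
  haveI : Nonempty (Fin n) := Fin.pos_iff_nonempty.mp hnpos
  set V := Fin n → F with hV
  let ψ : E →ₐ[F] (V →ₗ[F] V) :=
    (Matrix.toLinAlgEquiv' : Matrix (Fin n) (Fin n) F ≃ₐ[F] _).toAlgHom.comp ι
  letI : Module E V := Module.compHom V ψ.toRingHom
  have hsmul : ∀ (x : E) (v : V), x • v = (ι x).mulVec v := fun x v => rfl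
  haveI : IsScalarTower F E V := ⟨fun c x v => by
    show ψ (c • x) v = c • ψ x v
    rw [_root_.map_smul]
    rfl⟩
  haveI : FiniteDimensional E V := FiniteDimensional.right F E V
  have hrank : Module.finrank E V = 1 := by
    have h := Module.finrank_mul_finrank F E V
    rw [hn, Module.finrank_pi] at h
    simp only [Fintype.card_fin] at h
    nlinarith [Module.finrank_pos (R := E) (M := V)]
  let e : V ≃ₗ[E] E := LinearEquiv.ofFinrankEq V E (by rw [hrank, Module.finrank_self])
  constructor
  · intro B hB
    let g : V →ₗ[E] V :=
      { toFun := fun v => B.mulVec v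
        map_add' := fun v w => Matrix.mulVec_add B v w
        map_smul' := fun x v => by
          simp only [RingHom.id_apply, hsmul, Matrix.mulVec_mulVec, hB] }
    refine ⟨e (g (e.symm 1)), ?_⟩
    have key : ∀ v : V, B.mulVec v = (ι (e (g (e.symm 1)))).mulVec v := by
      intro v
      have hv : v = e v • e.symm 1 := by
        rw [← _root_.map_smul, smul_eq_mul, mul_one, e.symm_apply_apply]
      rw [← hsmul]
      conv_lhs => rw [show B.mulVec v = g v from rfl, hv, _root_.map_smul]
      apply e.injective
      rw [_root_.map_smul, _root_.map_smul, smul_eq_mul, smul_eq_mul, mul_comm]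
    have heq : Matrix.toLin' B = Matrix.toLin' (ι (e (g (e.symm 1)))) := by
      refine LinearMap.ext fun v => ?_
      simpa [Matrix.toLin'_apply] using key v
    exact Matrix.toLin'.injective heq
  · intro x
    let eF : V ≃ₗ[F] E := e.restrictScalars F
    have hconj : Matrix.toLin' (ι x) =
        (eF.symm : E →ₗ[F] V) ∘ₗ (Algebra.lmul F E x) ∘ₗ (eF : V →ₗ[F] E) := by
      refine LinearMap.ext fun v => ?_
      have h1 : eF.symm (x * eF v) = x • v := by
        calc eF.symm (x * eF v) = e.symm (x • e v) := by rw [smul_eq_mul]; rfl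
          _ = x • e.symm (e v) := _root_.map_smul e.symm x (e v)
          _ = x • v := by rw [e.symm_apply_apply]
      show Matrix.toLin' (ι x) v = eF.symm (x * eF v)
      rw [h1, hsmul, Matrix.toLin'_apply]
    rw [← LinearMap.det_toLin' (ι x), hconj]
    have hdc := LinearMap.det_conj (Algebra.lmul F E x) eF.symm
    rw [LinearEquiv.symm_symm] at hdc
    rw [hdc]
    exact (Algebra.norm_apply F x).symm

end NuAux

/-- If `E/F` (degree `n`, char `F ≠ 2`) is embedded `J`-symmetrically in
`M_n(F)` via `x ↦ ι x`, then the symmetric invertible matrices `ν` for which the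
embedding is `ν`-symmetric are exactly those of the form `J ⬝ ι x` with `x ∈ E^×`;
moreover `det (J ⬝ ι x) = (-1)^(n(n-1)/2) ⬝ N_{E/F}(x)`. -/
theorem nu_symmetric_matrices_eq_J_mul_torus
    {F E : Type*} [Field F] [Field E] [Algebra F E] [FiniteDimensional F E]
    (hF : ringChar F ≠ 2) {n : ℕ} (hn : Module.finrank F E = n)
    (ι : E →ₐ[F] Matrix (Fin n) (Fin n) F)
    (hsym : ∀ x : E, Jmat n F * (ι x)ᵀ * Jmat n F = ι x) :
    ({ν : Matrix (Fin n) (Fin n) F | νᵀ = ν ∧ IsUnit ν ∧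
        ∀ x : E, ι x = ν⁻¹ * (ι x)ᵀ * ν} =
      {ν : Matrix (Fin n) (Fin n) F | ∃ x : E, x ≠ 0 ∧ ν = Jmat n F * ι x}) ∧
    ∀ x : E, x ≠ 0 →
      (Jmat n F * ι x).det = (-1) ^ (n * (n - 1) / 2) * Algebra.norm F x := by
  classical
  obtain ⟨hcent, hdet⟩ := NuAux.centralizer_det hn ι
  have hnpos : 0 < n := hn ▸ Module.finrank_pos
  haveI : Nonempty (Fin n) := Fin.pos_iff_nonempty.mp hnpos
  set J := Jmat n F with hJdef
  have hJJ : J * J = 1 := NuAux.Jmat_mul_Jmat n F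
  have hJt : Jᵀ = J := NuAux.Jmat_transpose n F
  have hJunit : IsUnit J := ⟨⟨J, J, hJJ, hJJ⟩, rfl⟩
  have hJinv : J⁻¹ = J := Matrix.inv_eq_right_inv hJJ
  have hT : ∀ x : E, (ι x)ᵀ = J * ι x * J := by
    intro x
    calc (ι x)ᵀ = (J * J) * (ι x)ᵀ * (J * J) := by rw [hJJ, one_mul, mul_one]
      _ = J * (J * (ι x)ᵀ * J) * J := by noncomm_ring
      _ = J * ι x * J := by rw [hsym x]
  have hιunit : ∀ x : E, x ≠ 0 → IsUnit (ι x) := fun x hx =>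
    ⟨⟨ι x, ι x⁻¹, by rw [← _root_.map_mul, mul_inv_cancel₀ hx, _root_.map_one],
      by rw [← _root_.map_mul, inv_mul_cancel₀ hx, _root_.map_one]⟩, rfl⟩
  have hιinv : ∀ x : E, x ≠ 0 → (ι x)⁻¹ = ι x⁻¹ := fun x hx =>
    Matrix.inv_eq_right_inv (by rw [← _root_.map_mul, mul_inv_cancel₀ hx, _root_.map_one])
  constructor
  · ext ν
    simp only [Set.mem_setOf_eq]
    constructor
    · rintro ⟨hνt, hνu, hprop⟩
      have hνdet : IsUnit ν.det := (Matrix.isUnit_iff_isUnit_det ν).mp hνu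
      have hcomm : ∀ x : E, (J * ν) * ι x = ι x * (J * ν) := by
        intro x
        have h1 : ν * ι x = (ι x)ᵀ * ν := by
          conv_lhs => rw [hprop x]
          rw [← mul_assoc, ← mul_assoc, Matrix.mul_nonsing_inv ν hνdet, one_mul]
        calc J * ν * ι x = J * ((ι x)ᵀ * ν) := by rw [mul_assoc, h1]
          _ = J * (J * ι x * J * ν) := by rw [hT]
          _ = (J * J) * ι x * (J * ν) := by noncomm_ring
          _ = ι x * (J * ν) := by rw [hJJ, one_mul]
      obtain ⟨x, hx⟩ := hcent (J * ν) hcomm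
      have hν : ν = J * ι x := by
        calc ν = (J * J) * ν := by rw [hJJ, one_mul]
          _ = J * (J * ν) := by rw [mul_assoc]
          _ = J * ι x := by rw [hx]
      refine ⟨x, ?_, hν⟩
      intro h0
      rw [h0, map_zero, mul_zero] at hν
      exact hνu.ne_zero hν
    · rintro ⟨x, hx0, rfl⟩
      refine ⟨?_, hJunit.mul (hιunit x hx0), ?_⟩
      · calc (J * ι x)ᵀ = (ι x)ᵀ * Jᵀ := Matrix.transpose_mul _ _
          _ = (J * ι x * J) * J := by rw [hJt, hT]
          _ = (J * ι x) * (J * J) := by noncomm_ring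
          _ = J * ι x := by rw [hJJ, mul_one]
      · intro y
        have hinv : (J * ι x)⁻¹ = ι x⁻¹ * J := by
          rw [Matrix.mul_inv_rev, hιinv x hx0, hJinv]
        rw [hinv, hT y]
        have hre : ι x⁻¹ * J * (J * ι y * J) * (J * ι x) =
            ι x⁻¹ * ((J * J) * ι y * (J * J)) * ι x := by noncomm_ring
        rw [hre, hJJ, one_mul, mul_one, ← _root_.map_mul, ← _root_.map_mul]
        congr 1
        rw [mul_comm x⁻¹ y, mul_assoc, inv_mul_cancel₀ hx0, mul_one]
  · intro x hx
    rw [Matrix.det_mul, NuAux.det_Jmat, hdet x]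
end

section
/- Let 𝒢₁ ⊇ 𝒢₂ ⊇ … be a descending sequence of groups with each 𝒢_{i+1} normal in 𝒢_i and each index [𝒢_i : 𝒢_{i+1}] finite and odd. Let 𝒮 be a nonempty set on which 𝒢₁ acts transitively, such that for every descending chain 𝒪₁ ⊇ 𝒪₂ ⊇ … where 𝒪_i is a 𝒢_i-orbit, the intersection ∩_i 𝒪_i is a singleton. Let α be a permutation of 𝒮 of order at most two satisfying α(𝒢_i·x) = 𝒢_i·α(x) for all i and x ∈ 𝒮. Then α has a fixed point in 𝒮. -/
open MulAction

/-- An involution on a finite type of odd cardinality has a fixed point. -/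
lemma aux_involutive_fixed {Q : Type*} [Finite Q] (hodd : Odd (Nat.card Q))
    (f : Q → Q) (hf : Function.Involutive f) : ∃ q, f q = q := by
  classical
  by_contra hcon
  push_neg at hcon
  have : Fintype Q := Fintype.ofFinite Q
  rw [Nat.card_eq_fintype_card] at hodd
  have key : ∀ n (s : Finset Q), s.card ≤ n → (∀ a ∈ s, f a ∈ s) → Even s.card := by
    intro n
    induction n with
    | zero => intro s hs _; rw [Nat.le_zero.mp hs]; exact Even.zero
    | succ n ih =>
      intro s hs hinv
      rcases s.eq_empty_or_nonempty with rfl | ⟨a, ha⟩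
      · simp
      · have hfa : f a ∈ s := hinv a ha
        have hne : f a ≠ a := hcon a
        set s' := (s.erase a).erase (f a) with hs'
        have hfa' : f a ∈ s.erase a := Finset.mem_erase.mpr ⟨hne, hfa⟩
        have hcard' : s'.card = s.card - 2 := by
          rw [hs', Finset.card_erase_of_mem hfa', Finset.card_erase_of_mem ha]; omega
        have hmem' : ∀ b ∈ s', f b ∈ s' := by
          intro b hb
          rw [hs', Finset.mem_erase, Finset.mem_erase] at hb ⊢
          obtain ⟨hbfa, hba, hbs⟩ := hb
          refine ⟨fun h => hba (hf.injective h), ?_, hinv b hbs⟩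
          · intro h; exact hbfa (by rw [← hf b, h])
        have h2 : 2 ≤ s.card := by
          have := Finset.card_erase_of_mem ha
          have h1 : 1 ≤ (s.erase a).card := Finset.card_pos.mpr ⟨f a, hfa'⟩
          omega
        have := ih s' (by omega) hmem'
        rw [hcard'] at this
        rcases this with ⟨k, hk⟩
        exact ⟨k + 1, by omega⟩
  have := key (Finset.univ.card) Finset.univ le_rfl (fun a _ => Finset.mem_univ _)
  rw [Finset.card_univ] at this
  exact (Nat.not_even_iff_odd.mpr hodd) this

lemma aux_step {G S : Type*} [Group G] [MulAction G S]
    (H N : Subgroup G) (hle : N ≤ H)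
    (hnorm : ∀ g ∈ H, ∀ n ∈ N, g * n * g⁻¹ ∈ N)
    (hfin : N.relIndex H ≠ 0) (hodd : Odd (N.relIndex H))
    (α : Equiv.Perm S) (hα2 : ∀ x : S, α (α x) = x)
    (hequivH : ∀ y : S, α '' (orbit ↥H y) = orbit ↥H (α y))
    (hequivN : ∀ y : S, α '' (orbit ↥N y) = orbit ↥N (α y))
    (x : S) (hx : α x ∈ orbit ↥H x) :
    ∃ y, y ∈ orbit ↥H x ∧ α y ∈ orbit ↥N y := by
  classical
  set N' : Subgroup ↥H := N.subgroupOf H with hN'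
  haveI hN'norm : N'.Normal := by
    constructor
    intro n hn g
    rw [hN', Subgroup.mem_subgroupOf] at hn ⊢
    exact hnorm g g.2 n hn
  set K : Subgroup ↥H := N' ⊔ MulAction.stabilizer ↥H x with hK
  -- membership characterization of K
  have hKmem : ∀ k : ↥H, k ∈ K ↔ ∃ n ∈ N', ∃ s ∈ MulAction.stabilizer ↥H x, n * s = k := by
    intro k
    constructor
    · intro hk
      have : (k : ↥H) ∈ (↑(N' ⊔ MulAction.stabilizer ↥H x) : Set ↥H) := hk
      rw [Subgroup.normal_mul] at this
      obtain ⟨n, hn, s, hs, hns⟩ := this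
      exact ⟨n, hn, s, hs, hns⟩
    · rintro ⟨n, hn, s, hs, rfl⟩
      exact mul_mem (le_sup_left (α := Subgroup ↥H) hn) (le_sup_right (α := Subgroup ↥H) hs)
  -- key orbit equivalence
  have horb : ∀ h₁ h₂ : ↥H,
      ((h₁ : G) • x ∈ orbit ↥N ((h₂ : G) • x)) ↔ h₂⁻¹ * h₁ ∈ K := by
    intro h₁ h₂
    rw [mem_orbit_iff]
    constructor
    · rintro ⟨n, hn⟩
      rw [Subgroup.smul_def, smul_smul] at hn
      -- hn : (↑n * ↑h₂) • x = ↑h₁ • x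
      -- so (h₁⁻¹ n h₂) • x = x
      have hx1 : ((h₁ : G)⁻¹ * n * h₂) • x = x := by
        rw [mul_assoc, mul_smul, hn, ← mul_smul, inv_mul_cancel, one_smul]
      -- rewrite h₁⁻¹ n h₂ = (h₁⁻¹ n h₁) * (h₁⁻¹ h₂)
      set m : ↥H := h₁⁻¹ * h₂ with hm
      have hN2 : ((h₁ : G)⁻¹ * n * h₁) ∈ N := by
        have := hnorm (h₁ : G)⁻¹ (inv_mem h₁.2) n n.2
        simpa [mul_assoc] using this
      -- n' := h₁⁻¹ n h₁ ∈ N'; want h₂⁻¹ h₁ ∈ K i.e. m⁻¹ ∈ K, suffices m ∈ K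
      set n' : ↥H := ⟨(h₁ : G)⁻¹ * n * h₁, by
        exact mul_mem (mul_mem (inv_mem h₁.2) (hle n.2)) h₁.2⟩ with hn'
      have hn'N' : n' ∈ N' := by rw [hN', Subgroup.mem_subgroupOf]; exact hN2
      have hcoe : ((n' * m : ↥H) : G) = (h₁ : G)⁻¹ * ↑n * ↑h₂ := by
        rw [hn', hm]
        push_cast
        group
      have hstab : n' * m ∈ MulAction.stabilizer ↥H x := by
        rw [MulAction.mem_stabilizer_iff, Subgroup.smul_def, hcoe]
        exact hx1
      have hmK : m ∈ K := by
        rw [hKmem]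
        exact ⟨n'⁻¹, inv_mem hn'N', n' * m, hstab, by group⟩
      have : m⁻¹ ∈ K := inv_mem hmK
      simpa [hm, mul_inv_rev] using this
      -- end
    · intro hk
      have : (h₂⁻¹ * h₁ : ↥H) ∈ K := hk
      rw [hKmem] at this
      obtain ⟨n, hn, s, hs, hns⟩ := this
      rw [hN', Subgroup.mem_subgroupOf] at hn
      -- h₁ = h₂ n s, so h₁ • x = h₂ n • x; want h₁ • x ∈ orbit N (h₂ • x)
      -- h₁ • x = (h₂ n h₂⁻¹) • h₂ • x
      refine ⟨⟨(h₂ : G) * n * (h₂ : G)⁻¹, hnorm h₂ h₂.2 n hn⟩, ?_⟩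
      rw [Subgroup.smul_def]
      show ((h₂ : G) * n * (h₂ : G)⁻¹) • ((h₂ : G) • x) = (h₁ : G) • x
      rw [MulAction.mem_stabilizer_iff, Subgroup.smul_def] at hs
      have hsx : (s : G) • x = x := hs
      have h1eq : (h₁ : G) = (h₂ : G) * n * s := by
        have := congrArg (fun z : ↥H => ((h₂ * z : ↥H) : G)) hns
        simpa [mul_assoc] using this.symm
      rw [h1eq, smul_smul]
      have he : ((h₂ : G) * ↑n * (↑h₂)⁻¹ * ↑h₂) = (h₂ : G) * n := by group
      rw [he]
      conv_rhs => rw [mul_smul]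
      rw [hsx]
  -- the type of N-orbits inside the H-orbit of x
  set Ω := {O : Set S // ∃ h : ↥H, O = orbit ↥N ((h : G) • x)} with hΩ
  -- bijection with H ⧸ K
  have hwd : ∀ h₁ h₂ : ↥H, h₁⁻¹ * h₂ ∈ K →
      orbit ↥N ((h₁ : G) • x) = orbit ↥N ((h₂ : G) • x) := by
    intro h₁ h₂ h
    exact (orbit_eq_iff.mpr ((horb h₂ h₁).mpr h)).symm
  let φ : (↥H ⧸ K) → Ω := Quotient.lift
      (fun h : ↥H => (⟨orbit ↥N ((h : G) • x), h, rfl⟩ : Ω))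
      (fun h₁ h₂ hrel => Subtype.ext (hwd h₁ h₂ (QuotientGroup.leftRel_apply.mp hrel)))
  have hφbij : Function.Bijective φ := by
    constructor
    · intro q₁ q₂
      induction q₁ using Quotient.inductionOn with | h h₁ =>
      induction q₂ using Quotient.inductionOn with | h h₂ =>
      intro heq
      have : orbit ↥N ((h₁ : G) • x) = orbit ↥N ((h₂ : G) • x) :=
        congrArg Subtype.val heq
      refine Quotient.sound (QuotientGroup.leftRel_apply.mpr ?_)
      exact (horb h₂ h₁).mp (this ▸ mem_orbit_self _)
    · rintro ⟨O, h, rfl⟩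
      exact ⟨⟦h⟧, rfl⟩
  have hcardΩ : Nat.card Ω = K.index := by
    rw [Subgroup.index]
    exact (Nat.card_congr (Equiv.ofBijective φ hφbij)).symm
  have hdvd : K.index ∣ N'.index := Subgroup.index_dvd_of_le le_sup_left
  have hrel : N.relIndex H = N'.index := rfl
  rw [hrel] at hfin hodd
  have hKfin : K.index ≠ 0 := fun h => hfin (by
    rcases hdvd with ⟨c, hc⟩
    rw [h] at hc; simpa [hc])
  have hKodd : Odd K.index := by
    rcases hdvd with ⟨c, hc⟩
    rw [hc, Nat.odd_mul] at hodd
    exact hodd.1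
  haveI : Finite Ω := Nat.finite_of_card_ne_zero (by rw [hcardΩ]; exact hKfin)
  have hΩodd : Odd (Nat.card Ω) := by rw [hcardΩ]; exact hKodd
  -- α acts on Ω
  have hβex : ∀ o : Ω, ∃ h' : ↥H, α '' o.1 = orbit ↥N ((h' : G) • x) := by
    rintro ⟨O, h, rfl⟩
    rw [hequivN]
    have hmem : α ((h : G) • x) ∈ orbit ↥H x := by
      have h1 : (h : G) • x ∈ orbit ↥H x := by
        rw [← Subgroup.smul_def]; exact mem_orbit x h
      have h2 : α ((h : G) • x) ∈ α '' orbit ↥H x := ⟨_, h1, rfl⟩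
      rw [hequivH, orbit_eq_iff.mpr hx] at h2
      exact h2
    obtain ⟨h', hh'⟩ := mem_orbit_iff.mp hmem
    rw [Subgroup.smul_def] at hh'
    exact ⟨h', by rw [hh']⟩
  let β : Ω → Ω := fun o => ⟨α '' o.1, hβex o⟩
  have hβinv : Function.Involutive β := by
    intro o
    apply Subtype.ext
    show α '' (α '' o.1) = o.1
    rw [← Set.image_comp]
    have : ⇑α ∘ ⇑α = id := funext hα2
    rw [this, Set.image_id]
  obtain ⟨o, ho⟩ := aux_involutive_fixed hΩodd β hβinv
  obtain ⟨O, h, hO⟩ := o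
  have hfix : α '' O = O := congrArg Subtype.val ho
  refine ⟨(h : G) • x, ?_, ?_⟩
  · rw [← Subgroup.smul_def]; exact mem_orbit x h
  · have : α '' O = orbit ↥N (α ((h : G) • x)) := by rw [hO, hequivN]
    rw [hfix, hO] at this
    rw [this]
    exact mem_orbit_self _



/-- Let `𝒢₁ ⊇ 𝒢₂ ⊇ …` be a descending sequence of groups, each normal
in the previous one and of finite odd index, acting (via the ambient group `G = 𝒢₁`,
here `chain 0 = ⊤`) transitively on a nonempty set `S`, such that the intersection of
any descending chain of orbits `𝒪_i` (an orbit of `chain i` for each `i`) is a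
singleton.  If `α` is a permutation of `S` of order at most two permuting each family
of `chain i`-orbits, then `α` has a fixed point. -/
theorem fixed_point_of_odd_index_chain
    {G S : Type*} [Group G] [MulAction G S] [Nonempty S]
    (chain : ℕ → Subgroup G)
    (h0 : chain 0 = ⊤)
    (hanti : ∀ i, chain (i + 1) ≤ chain i)
    (hnormal : ∀ i, ∀ g ∈ chain i, ∀ h ∈ chain (i + 1), g * h * g⁻¹ ∈ chain (i + 1))
    (hfin : ∀ i, (chain (i + 1)).relIndex (chain i) ≠ 0)
    (hodd : ∀ i, Odd ((chain (i + 1)).relIndex (chain i)))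
    (htrans : ∀ x y : S, ∃ g : G, g • x = y)
    (hchain : ∀ O : ℕ → Set S,
      (∀ i, ∃ x : S, O i = MulAction.orbit ↥(chain i) x) →
      (∀ i, O (i + 1) ⊆ O i) →
      ∃ a : S, (⋂ i, O i) = {a})
    (α : Equiv.Perm S) (hα2 : ∀ x : S, α (α x) = x)
    (hequiv : ∀ (i : ℕ) (x : S),
      α '' (MulAction.orbit ↥(chain i) x) = MulAction.orbit ↥(chain i) (α x)) :
    ∃ x : S, α x = x := by
  classical
  obtain ⟨x₀⟩ := ‹Nonempty S›
  -- step: given an α-invariant chain-i orbit (witnessed by α x ∈ orbit x), find one inside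
  have key : ∀ (i : ℕ) (x : S), α x ∈ MulAction.orbit ↥(chain i) x →
      ∃ y, y ∈ MulAction.orbit ↥(chain i) x ∧ α y ∈ MulAction.orbit ↥(chain (i+1)) y :=
    fun i x hx => aux_step (chain i) (chain (i+1)) (hanti i) (hnormal i) (hfin i) (hodd i)
      α hα2 (hequiv i) (hequiv (i+1)) x hx
  -- base : α x₀ ∈ orbit (chain 0) x₀
  have base : α x₀ ∈ MulAction.orbit ↥(chain 0) x₀ := by
    obtain ⟨g, hg⟩ := htrans x₀ (α x₀)
    exact ⟨⟨g, by rw [h0]; trivial⟩, hg⟩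
  -- the recursively chosen sequence
  let F : ∀ i : ℕ, {y : S // α y ∈ MulAction.orbit ↥(chain i) y} := fun i =>
    Nat.rec ⟨x₀, base⟩
      (fun i p => ⟨(key i p.1 p.2).choose, (key i p.1 p.2).choose_spec.2⟩) i
  have hFsucc : ∀ i, (F (i+1)).1 ∈ MulAction.orbit ↥(chain i) (F i).1 := fun i =>
    (key i (F i).1 (F i).2).choose_spec.1
  set O : ℕ → Set S := fun i => MulAction.orbit ↥(chain i) (F i).1 with hO
  have hOsub : ∀ i, O (i+1) ⊆ O i := by
    intro i y hy
    obtain ⟨n, hn⟩ := hy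
    have hmem : (F (i+1)).1 ∈ O i := hFsucc i
    have : y ∈ MulAction.orbit ↥(chain i) (F (i+1)).1 := by
      refine ⟨⟨(n : G), hanti i n.2⟩, ?_⟩
      show (⟨(n : G), hanti i n.2⟩ : ↥(chain i)) • (F (i+1)).1 = y
      rw [Subgroup.smul_def]
      have hn' : (n : G) • (F (i+1)).1 = y := by
        rw [← Subgroup.smul_def]; exact hn
      exact hn'
    rw [MulAction.orbit_eq_iff.mpr hmem] at this
    exact this
  obtain ⟨a, ha⟩ := hchain O (fun i => ⟨(F i).1, rfl⟩) hOsub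
  have haO : ∀ i, a ∈ O i := by
    intro i
    have : a ∈ ⋂ i, O i := by rw [ha]; rfl
    exact Set.mem_iInter.mp this i
  have hαa : ∀ i, α a ∈ O i := by
    intro i
    have h1 : α a ∈ α '' O i := ⟨a, haO i, rfl⟩
    rw [hO] at h1 ⊢
    rw [hequiv i, MulAction.orbit_eq_iff.mpr (F i).2] at h1
    exact h1
  have : α a ∈ ⋂ i, O i := Set.mem_iInter.mpr hαa
  rw [ha] at this
  exact ⟨a, this⟩
end
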